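/- Let a > 1, set τ_a = a^a/(a−1)^{a−1}, let c ∈ ℂ⁴, and define ψ₀ : ℝ³ → ℂ⁴ by ψ₀(x) = exp( (a/(a−1))^a (1+|x|)^{1−a} ) c. Then for every x ∈ ℝ³ with x ≠ 0, −i Σ_{j=1}^3 α_j ∂_jψ₀(x) = τ_a (1+|x|)^{−a} · i (α·x̂) ψ₀(x); equivalently, ψ₀ solves the Euler–Lagrange equation −iα·∇ψ₀ + τ_a (−i α·x̂) (1+|x|)^{−a} ((1+2S·L)ψ₀) = 0 on ℝ³∖{0}. -/

import Mathlib

open MeasureTheory Real ComplexConjugate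
open scoped InnerProductSpace

noncomputable section

abbrev R3 := EuclideanSpace ℝ (Fin 3)
abbrev C4 := EuclideanSpace ℂ (Fin 4)

/-- The Pauli matrices. -/
def pauli : Fin 3 → Matrix (Fin 2) (Fin 2) ℂ
  | 0 => !![0, 1; 1, 0]
  | 1 => !![0, -Complex.I; Complex.I, 0]
  | 2 => !![1, 0; 0, -1]

/-- Reindex a 2×2 block matrix as a 4×4 matrix. -/
def blocks4 (A B C D : Matrix (Fin 2) (Fin 2) ℂ) : Matrix (Fin 4) (Fin 4) ℂ :=
  Matrix.reindex finSumFinEquiv finSumFinEquiv (Matrix.fromBlocks A B C D)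

/-- The Dirac alpha matrices. -/
def diracAlpha (j : Fin 3) : Matrix (Fin 4) (Fin 4) ℂ :=
  blocks4 0 (pauli j) (pauli j) 0

/-- The Dirac beta matrix. -/
def diracBeta : Matrix (Fin 4) (Fin 4) ℂ :=
  blocks4 1 0 0 (-1)

/-- The spin matrices Sⱼ. -/
def spinS (j : Fin 3) : Matrix (Fin 4) (Fin 4) ℂ :=
  (1/2 : ℂ) • blocks4 (pauli j) 0 0 (pauli j)

/-- Action of a 4×4 complex matrix on ℂ⁴. -/
def act (M : Matrix (Fin 4) (Fin 4) ℂ) (v : C4) : C4 :=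
  WithLp.toLp 2 (M.mulVec v)

/-- Partial derivative of a ℂ⁴-valued function on ℝ³. -/
def pderiv3 (j : Fin 3) (ψ : R3 → C4) (x : R3) : C4 :=
  fderiv ℝ ψ x (EuclideanSpace.single j 1)

/-- The free Dirac operator with mass m. -/
def diracOp (m : ℝ) (ψ : R3 → C4) (x : R3) : C4 :=
  (-Complex.I) • ∑ j, act (diracAlpha j) (pderiv3 j ψ x) + (m : ℂ) • act diracBeta (ψ x)

/-- The massless Dirac operator `-iα·∇`. -/
def masslessDirac (ψ : R3 → C4) (x : R3) : C4 :=
  (-Complex.I) • ∑ j, act (diracAlpha j) (pderiv3 j ψ x)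

/-- The orbital angular momentum component Lⱼψ = −i (x × ∇ψ)ⱼ. -/
def orbL (j : Fin 3) (ψ : R3 → C4) (x : R3) : C4 :=
  (-Complex.I) • ((x (j + 1) : ℂ) • pderiv3 (j + 2) ψ x - (x (j + 2) : ℂ) • pderiv3 (j + 1) ψ x)

/-- The spin-orbit operator (1 + 2 S·L). -/
def spinOrbit (ψ : R3 → C4) (x : R3) : C4 :=
  ψ x + (2 : ℂ) • ∑ j, act (spinS j) (orbL j ψ x)

/-- The radial derivative of a scalar function on ℝ³. -/
def radialDeriv (f : R3 → ℝ) (x : R3) : ℝ :=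
  ∑ j, (x j / ‖x‖) * fderiv ℝ f x (EuclideanSpace.single j 1)

/-- The radial derivative of a ℂ⁴-valued function on ℝ³. -/
def radialDerivV (ψ : R3 → C4) (x : R3) : C4 :=
  ∑ j, ((x j / ‖x‖ : ℝ) : ℂ) • pderiv3 j ψ x

/-- α·x̂, the Dirac matrix contracted with the unit radial vector. -/
def alphaHat (x : R3) : Matrix (Fin 4) (Fin 4) ℂ :=
  ∑ j, ((x j / ‖x‖ : ℝ) : ℂ) • diracAlpha j

/-- A function on ℝ³ is radial if it depends only on the norm of its argument. -/
def IsRadial {E : Type*} (f : R3 → E) : Prop :=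
  ∀ x y : R3, ‖x‖ = ‖y‖ → f x = f y


lemma hasFDerivAt_norm3 (x : R3) (hx : x ≠ 0) :
    HasFDerivAt (fun y : R3 => ‖y‖) (‖x‖⁻¹ • innerSL ℝ x) x := by
  have h1 : HasFDerivAt (fun y : R3 => ‖y‖ ^ 2) ((2 : ℝ) • innerSL ℝ x) x := by
    have := (hasStrictFDerivAt_norm_sq x).hasFDerivAt
    exact this.congr_fderiv (by ext v; simp)
  have hnorm : 0 < ‖x‖ := norm_pos_iff.mpr hx
  have hne : ‖x‖ ^ 2 ≠ 0 := by positivity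
  have h2 := h1.sqrt hne
  have heq : (fun y : R3 => Real.sqrt (‖y‖ ^ 2)) = fun y : R3 => ‖y‖ := by
    funext y; rw [Real.sqrt_sq (norm_nonneg y)]
  rw [heq] at h2
  refine h2.congr_fderiv ?_
  rw [Real.sqrt_sq (norm_nonneg x), smul_smul]
  congr 1
  field_simp

lemma real_smul_c4 (t : ℝ) (v : C4) : (t : ℂ) • v = t • v :=
  (RCLike.real_smul_eq_coe_smul (K := ℂ) t v).symm

lemma sum3_mulVec (f : Fin 3 → Matrix (Fin 4) (Fin 4) ℂ) (v : Fin 4 → ℂ) :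
    (∑ j, f j).mulVec v = ∑ j, (f j).mulVec v := by
  ext i
  simp only [Matrix.mulVec, Matrix.sum_apply, dotProduct, Finset.sum_mul, Finset.sum_apply]
  rw [Finset.sum_comm]

lemma act_smul (M : Matrix (Fin 4) (Fin 4) ℂ) (s : ℂ) (v : C4) :
    act M (s • v) = s • act M v := by
  simp only [act, WithLp.ofLp_smul, Matrix.mulVec_smul, WithLp.toLp_smul]

lemma act_sum_smul (g : Fin 3 → ℂ) (f : Fin 3 → Matrix (Fin 4) (Fin 4) ℂ) (v : C4) :
    act (∑ j, g j • f j) v = ∑ j, g j • act (f j) v := by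
  simp only [act, sum3_mulVec, Matrix.smul_mulVec, WithLp.toLp_sum, WithLp.toLp_smul]

/-- The polynomial-weight minimiser solves the Euler-Lagrange equation. -/
theorem euler_lagrange_polynomial (a : ℝ) (ha : 1 < a) (c : C4) (ψ₀ : R3 → C4)
    (hψ₀ : ∀ x : R3, ψ₀ x =
      (Real.exp ((a / (a - 1)) ^ a * (1 + ‖x‖) ^ (1 - a)) : ℂ) • c)
    (x : R3) (hx : x ≠ 0) :
    masslessDirac ψ₀ x =
        ((a ^ a / (a - 1) ^ (a - 1) * (1 + ‖x‖) ^ (-a) : ℝ) : ℂ) •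
          (Complex.I • act (alphaHat x) (ψ₀ x)) ∧
      masslessDirac ψ₀ x + ((a ^ a / (a - 1) ^ (a - 1) : ℝ) : ℂ) •
        ((-Complex.I) • act (alphaHat x)
          ((((1 + ‖x‖) ^ (-a) : ℝ) : ℂ) • spinOrbit ψ₀ x)) = 0 := by
  classical
  -- notation
  set r : ℝ := ‖x‖ with hr
  have hrpos : 0 < r := norm_pos_iff.mpr hx
  have ha1 : (0:ℝ) < a - 1 := by linarith
  have h1r : (0:ℝ) < 1 + r := by linarith
  set K : ℝ := (a / (a - 1)) ^ a with hK
  set τ : ℝ := a ^ a / (a - 1) ^ (a - 1) with hτ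
  set E : ℝ := Real.exp (K * (1 + r) ^ (1 - a)) with hE
  set p : ℝ := (1 + r) ^ (-a) with hp
  set G : ℝ := E * (K * ((1 - a) * p)) with hG
  -- the key scalar identity : K * (1 - a) = -τ
  have hKτ : K * (1 - a) = -τ := by
    have hapos : (0:ℝ) < a := by linarith
    have hdiv : (a / (a - 1)) ^ a = a ^ a / (a - 1) ^ a :=
      Real.div_rpow hapos.le ha1.le a
    have hsplit : (a - 1) ^ a = (a - 1) ^ (a - 1) * (a - 1) := by
      have : (a - 1) ^ ((a - 1) + 1) = (a - 1) ^ (a - 1) * (a - 1) ^ (1:ℝ) :=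
        Real.rpow_add ha1 _ _
      simpa [Real.rpow_one] using this
    have h1 : (0:ℝ) < (a - 1) ^ (a - 1) := Real.rpow_pos_of_pos ha1 _
    rw [hK, hτ, hdiv, hsplit]
    field_simp
    ring
  -- replace ψ₀ by its formula
  have hψfun : ψ₀ = fun y : R3 => (Real.exp (K * (1 + ‖y‖) ^ (1 - a)) : ℂ) • c :=
    funext hψ₀
  subst hψfun
  -- derivative of the scalar profile
  have hg : HasDerivAt (fun t : ℝ => Real.exp (K * (1 + t) ^ (1 - a)))
      (E * (K * ((1 - a) * (1 + r) ^ (1 - a - 1) * 1))) r := by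
    have h0 : HasDerivAt (fun t : ℝ => 1 + t) 1 r := by
      simpa using (hasDerivAt_id r).const_add (1:ℝ)
    have h1 : HasDerivAt (fun t : ℝ => (1 + t) ^ (1 - a))
        ((1 - a) * (1 + r) ^ (1 - a - 1) * 1) r :=
      (Real.hasDerivAt_rpow_const (p := 1 - a) (Or.inl h1r.ne')).comp r h0
    have h2 := h1.const_mul K
    have h3 := (Real.hasDerivAt_exp (K * (1 + r) ^ (1 - a))).comp r h2
    simpa [hE, Function.comp_def, mul_comm, mul_left_comm, mul_assoc] using h3
  have hgG : HasDerivAt (fun t : ℝ => Real.exp (K * (1 + t) ^ (1 - a))) G r := by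
    convert hg using 1
    rw [hG, hp]
    have : (1:ℝ) - a - 1 = -a := by ring
    rw [this]; ring
  -- derivative of ψ₀ as a function on R3
  have hψreal : (fun y : R3 => (Real.exp (K * (1 + ‖y‖) ^ (1 - a)) : ℂ) • c)
      = fun y : R3 => (Real.exp (K * (1 + ‖y‖) ^ (1 - a))) • c := by
    funext y; rw [real_smul_c4]
  have hF : HasFDerivAt (fun y : R3 => (Real.exp (K * (1 + ‖y‖) ^ (1 - a)) : ℂ) • c)
      (((G • (‖x‖⁻¹ • innerSL ℝ x))).smulRight c) x := by
    rw [hψreal]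
    have hcomp := (hgG.comp_hasFDerivAt x (hasFDerivAt_norm3 x hx))
    exact hcomp.smul_const c
  -- the partial derivatives
  have hpder : ∀ j : Fin 3, pderiv3 j (fun y : R3 =>
      (Real.exp (K * (1 + ‖y‖) ^ (1 - a)) : ℂ) • c) x
      = ((G * (x j / r) : ℝ) : ℂ) • c := by
    intro j
    rw [pderiv3, hF.fderiv]
    have hinner : (innerSL ℝ x) (EuclideanSpace.single j (1:ℝ)) = x j := by
      simp [EuclideanSpace.inner_single_right]
    simp only [ContinuousLinearMap.smulRight_apply, ContinuousLinearMap.smul_apply, hinner]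
    rw [real_smul_c4]
    congr 1
    simp only [smul_eq_mul, ← hr, div_eq_mul_inv]
    ring
  -- abbreviation for the mulVec of c
  have hψx : (fun y : R3 => (Real.exp (K * (1 + ‖y‖) ^ (1 - a)) : ℂ) • c) x
      = ((E : ℝ) : ℂ) • c := by
    simp only [← hr, hE]
  have hKτC : (K : ℂ) * ((1 : ℂ) - (a : ℂ)) = -(τ : ℂ) := by
    have h := congrArg (fun t : ℝ => (t : ℂ)) hKτ
    push_cast at h
    exact h
  have hGC : (G : ℂ) = (E : ℂ) * ((K : ℂ) * (((1 : ℂ) - (a : ℂ)) * (p : ℂ))) := by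
    rw [hG]; push_cast; ring
  have hmain : masslessDirac (fun y : R3 => (Real.exp (K * (1 + ‖y‖) ^ (1 - a)) : ℂ) • c) x
      = ((τ * p : ℝ) : ℂ) • (Complex.I • act (alphaHat x)
          ((fun y : R3 => (Real.exp (K * (1 + ‖y‖) ^ (1 - a)) : ℂ) • c) x)) := by
    have hAct : act (alphaHat x) (((E : ℝ) : ℂ) • c)
        = ((E : ℝ) : ℂ) • ∑ j, ((x j / r : ℝ) : ℂ) • act (diracAlpha j) c := by
      rw [act_smul]
      congr 1
      rw [alphaHat]
      simpa only [← hr] using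
        act_sum_smul (fun j => ((x j / ‖x‖ : ℝ) : ℂ)) diracAlpha c
    rw [masslessDirac, hψx, hAct]
    simp only [hpder, act_smul]
    simp only [Finset.smul_sum]
    refine Finset.sum_congr rfl fun j _ => ?_
    simp only [smul_smul]
    congr 1
    push_cast
    rw [hGC]
    linear_combination (-Complex.I * (E : ℂ) * (p : ℂ) * ((x j : ℂ) / (r : ℂ))) * hKτC
  refine ⟨hmain, ?_⟩
  have horb : ∀ j : Fin 3, orbL j (fun y : R3 =>
      (Real.exp (K * (1 + ‖y‖) ^ (1 - a)) : ℂ) • c) x = 0 := by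
    intro j
    rw [orbL, hpder, hpder]
    rw [smul_smul, smul_smul]
    have hsc : (x (j + 1) : ℂ) * ((G * (x (j + 2) / r) : ℝ) : ℂ)
        = (x (j + 2) : ℂ) * ((G * (x (j + 1) / r) : ℝ) : ℂ) := by
      push_cast; ring
    rw [hsc, sub_self, smul_zero]
  have hso : spinOrbit (fun y : R3 => (Real.exp (K * (1 + ‖y‖) ^ (1 - a)) : ℂ) • c) x
      = (fun y : R3 => (Real.exp (K * (1 + ‖y‖) ^ (1 - a)) : ℂ) • c) x := by
    rw [spinOrbit]
    simp only [horb, act, WithLp.ofLp_zero, Matrix.mulVec_zero, WithLp.toLp_zero, smul_zero, Finset.sum_const_zero, add_zero]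
  rw [hmain, hso, hψx, act_smul, act_smul, act_smul, Complex.ofReal_mul]
  module
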